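/- For every real α with 0 < α < 1 and every real β with α/2 ≤ β ≤ 1 - α/2, it holds that f^Acc(α,β) ≤ 0, with equality if and only if β = 1/2. In particular, for fixed α the function β ↦ f^Acc(α,β) attains its maximum value 0 at β = 1/2. -/

import Mathlib

/-- Binary entropy function with natural logarithm (`Real.log 0 = 0` gives `H 0 = H 1 = 0`). -/
noncomputable def H (x : ℝ) : ℝ := -x * Real.log x - (1 - x) * Real.log (1 - x)

/-- Asymptotic input-output weight distribution of the rate-1 accumulator. -/
noncomputable def fAcc (α β : ℝ) : ℝ :=
  (1 - β) * H (α / (2 * (1 - β))) + β * H (α / (2 * β)) - H α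

open Real in
noncomputable def phiAux (c x : ℝ) : ℝ :=
  x * Real.log x - (x - c) * Real.log (x - c) - c * Real.log c

open Real in
lemma phi_eq (c x : ℝ) (hc : 0 < c) (hcx : c ≤ x) :
    x * H (c / x) = phiAux c x := by
  have hx : 0 < x := lt_of_lt_of_le hc hcx
  rcases eq_or_lt_of_le hcx with h | h
  · subst h
    simp [H, phiAux, div_self hx.ne']
  · have hxc : 0 < x - c := sub_pos.mpr h
    unfold H phiAux
    rw [Real.log_div hc.ne' hx.ne']
    have h1 : 1 - c / x = (x - c) / x := by field_simp
    rw [h1, Real.log_div hxc.ne' hx.ne']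
    field_simp
    ring

open Real in
lemma phi_deriv (c : ℝ) (hc : 0 < c) {x : ℝ} (hx : c < x) :
    deriv (phiAux c) x = Real.log x - Real.log (x - c) := by
  have hx0 : (0:ℝ) < x := hc.trans hx
  have hxc : (0:ℝ) < x - c := sub_pos.mpr hx
  have h1 : HasDerivAt (fun x => x * Real.log x) (Real.log x + 1) x :=
    Real.hasDerivAt_mul_log hx0.ne'
  have h2 : HasDerivAt (fun x : ℝ => (x - c) * Real.log (x - c))
      ((Real.log (x - c) + 1) * 1) x := by
    exact (Real.hasDerivAt_mul_log hxc.ne').comp x ((hasDerivAt_id x).sub_const c)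
  have h3 : HasDerivAt (phiAux c) (Real.log x - Real.log (x - c)) x := by
    have := (h1.sub h2).sub_const (c * Real.log c)
    exact this.congr_deriv (by ring)
  exact h3.deriv

open Real in
lemma phi_strictConcave (c : ℝ) (hc : 0 < c) :
    StrictConcaveOn ℝ (Set.Ici c) (phiAux c) := by
  apply StrictAntiOn.strictConcaveOn_of_deriv (convex_Ici c)
  · have : Continuous (phiAux c) := by
      unfold phiAux
      exact (Real.continuous_mul_log.sub
        (Real.continuous_mul_log.comp (continuous_id.sub continuous_const))).sub
        continuous_const
    exact this.continuousOn
  · rw [interior_Ici]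
    intro x hx y hy hxy
    rw [Set.mem_Ioi] at hx hy
    rw [phi_deriv c hc hx, phi_deriv c hc hy]
    have hx0 : (0:ℝ) < x := hc.trans hx
    have hy0 : (0:ℝ) < y := hc.trans hy
    have hxc : (0:ℝ) < x - c := sub_pos.mpr hx
    have hyc : (0:ℝ) < y - c := sub_pos.mpr hy
    have key : y * (x - c) < x * (y - c) := by nlinarith
    have : Real.log (y * (x - c)) < Real.log (x * (y - c)) :=
      Real.log_lt_log (by positivity) key
    rw [Real.log_mul hy0.ne' hxc.ne', Real.log_mul hx0.ne' hyc.ne'] at this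
    linarith

open Real in
lemma fAcc_eq (α β : ℝ) (hα0 : 0 < α) (hα1 : α < 1)
    (hβl : α / 2 ≤ β) (hβu : β ≤ 1 - α / 2) :
    fAcc α β = phiAux (α/2) (1 - β) + phiAux (α/2) β - 2 * phiAux (α/2) (1/2) := by
  have hc : (0:ℝ) < α / 2 := by linarith
  have h1β : α / 2 ≤ 1 - β := by linarith
  have e1 : α / (2 * (1 - β)) = (α/2) / (1 - β) := by
    rw [div_div]
  have e2 : α / (2 * β) = (α/2) / β := by
    rw [div_div]
  have hHα : H α = 2 * phiAux (α/2) (1/2) := by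
    have hα2 : (0:ℝ) < 1 - α := by linarith
    have h12c : (0:ℝ) < 1/2 - α/2 := by linarith
    unfold H phiAux
    have l1 : Real.log (1/2 - α/2) = Real.log (1 - α) - Real.log 2 := by
      have : (1/2 - α/2 : ℝ) = (1 - α) / 2 := by ring
      rw [this, Real.log_div hα2.ne' two_ne_zero]
    have l2 : Real.log α = Real.log 2 + Real.log (α/2) := by
      rw [← Real.log_mul two_ne_zero hc.ne']
      congr 1
      ring
    have l3 : Real.log (1/2 : ℝ) = - Real.log 2 := by
      rw [one_div, Real.log_inv]
    rw [l1, l2, l3]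
    ring
  rw [fAcc, e1, e2, phi_eq (α/2) (1-β) hc h1β, phi_eq (α/2) β hc hβl, hHα]

theorem stmt_1 (α β : ℝ) (hα0 : 0 < α) (hα1 : α < 1)
    (hβl : α / 2 ≤ β) (hβu : β ≤ 1 - α / 2) :
    fAcc α β ≤ 0 ∧ (fAcc α β = 0 ↔ β = 1 / 2) := by
  have hc : (0:ℝ) < α / 2 := by linarith
  have heq := fAcc_eq α β hα0 hα1 hβl hβu
  by_cases hb : β = 1/2
  · subst hb
    constructor
    · rw [heq]; ring_nf; norm_num
    · refine ⟨fun _ => rfl, fun _ => ?_⟩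
      rw [heq]; ring_nf
  · have hne : β ≠ 1 - β := fun h => hb (by linarith)
    have sc := phi_strictConcave (α/2) hc
    have hmem1 : β ∈ Set.Ici (α/2) := hβl
    have hmem2 : (1 - β) ∈ Set.Ici (α/2) := by simp; linarith
    have key := sc.2 hmem1 hmem2 hne (by norm_num : (0:ℝ) < 1/2)
      (by norm_num : (0:ℝ) < 1/2) (by norm_num)
    simp only [smul_eq_mul] at key
    have hmid : (1/2 : ℝ) * β + (1/2) * (1 - β) = 1/2 := by ring
    rw [hmid] at key
    have hlt : fAcc α β < 0 := by rw [heq]; linarith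
    exact ⟨le_of_lt hlt, ⟨fun h => absurd h (ne_of_lt hlt), fun h => absurd h hb⟩⟩
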